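/- (Maximum principle for the time optimal control problem.) If (τ*, u*) solves (TP)^M with ψ ∉ B(0,r), then there exists η ∈ X, η ≠ 0, such that for almost every t ∈ (0,τ*), ⟨u*(t), B*T*_{τ*-t}η⟩_U = max{⟨v, B*T*_{τ*-t}η⟩_U : v ∈ U, ||v||_U ≤ M}, and moreover η = -z(τ*;ψ,u*). -/

import Mathlib

open MeasureTheory Filter
open scoped RealInnerProductSpace

/-- The state trajectory `z(t;ψ,u) = T_t ψ + ∫_0^t T_{t-σ} B u(σ) dσ`. -/
noncomputable def traj {X U : Type*} [NormedAddCommGroup X] [NormedSpace ℝ X] [CompleteSpace X]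
    [NormedAddCommGroup U] [NormedSpace ℝ U]
    (T : ℝ → X →L[ℝ] X) (B : U →L[ℝ] X) (ψ : X) (u : ℝ → U) (t : ℝ) : X :=
  T t ψ + ∫ σ in Set.Ioc 0 t, T (t - σ) (B (u σ))

/-- `u` belongs to the closed ball of radius `M` in `L^∞((0,∞);U)`. -/
def admissible {U : Type*} [NormedAddCommGroup U] (M : ℝ) (u : ℝ → U) : Prop :=
  AEStronglyMeasurable u (volume.restrict (Set.Ioi 0)) ∧
    ∀ᵐ t ∂volume.restrict (Set.Ioi 0), ‖u t‖ ≤ M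

open scoped Topology

section Aux
variable {X U : Type*} [NormedAddCommGroup X] [NormedSpace ℝ X] [CompleteSpace X]
  [NormedAddCommGroup U] [NormedSpace ℝ U]

lemma sg_bound {X : Type*} [NormedAddCommGroup X] [NormedSpace ℝ X] [CompleteSpace X]
    (T : ℝ → X →L[ℝ] X) (hTcont : ∀ x : X, Continuous fun t => T t x) (a b : ℝ) :
    ∃ C : ℝ, 0 ≤ C ∧ ∀ s ∈ Set.Icc a b, ‖T s‖ ≤ C := by
  have h : ∀ x : X, ∃ C, ∀ s : Set.Icc a b, ‖T s x‖ ≤ C := by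
    intro x
    rcases isEmpty_or_nonempty (Set.Icc a b) with h | h
    · exact ⟨0, fun s => isEmptyElim s⟩
    · obtain ⟨C, hC⟩ := (isCompact_Icc.image (hTcont x).norm).bddAbove
      exact ⟨C, fun s => hC ⟨s.1, s.2, rfl⟩⟩
  obtain ⟨C', hC'⟩ := banach_steinhaus (g := fun s : Set.Icc a b => T s) (fun x => h x)
  exact ⟨max C' 0, le_max_right _ _, fun s hs => le_trans (hC' ⟨s, hs⟩) (le_max_left _ _)⟩


lemma sg_jointCont {X : Type*} [NormedAddCommGroup X] [NormedSpace ℝ X] [CompleteSpace X]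
    (T : ℝ → X →L[ℝ] X) (hTcont : ∀ x : X, Continuous fun t => T t x) :
    Continuous fun p : ℝ × X => T p.1 p.2 := by
  rw [continuous_iff_continuousAt]
  rintro ⟨s₀, x₀⟩
  obtain ⟨C, hC0, hC⟩ := sg_bound T hTcont (s₀ - 1) (s₀ + 1)
  rw [Metric.continuousAt_iff]
  intro ε hε
  have hcont := (hTcont x₀).continuousAt (x := s₀)
  rw [Metric.continuousAt_iff] at hcont
  obtain ⟨δ₁, hδ₁0, hδ₁⟩ := hcont (ε/2) (by positivity)
  refine ⟨min (min δ₁ 1) (ε / (2 * (C + 1))), by positivity, ?_⟩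
  rintro ⟨s, x⟩ hd
  rw [Prod.dist_eq, max_lt_iff] at hd
  obtain ⟨hds, hdx⟩ := hd
  have hs1 : |s - s₀| < 1 := lt_of_lt_of_le (by simpa [Real.dist_eq] using hds) (le_trans (min_le_left _ _) (min_le_right _ _))
  have hsmem : s ∈ Set.Icc (s₀ - 1) (s₀ + 1) := by
    constructor <;> [linarith [abs_lt.mp hs1] ; linarith [abs_lt.mp hs1]]
  calc dist (T s x) (T s₀ x₀) ≤ dist (T s x) (T s x₀) + dist (T s x₀) (T s₀ x₀) := dist_triangle _ _ _
    _ < ε := by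
        have h1 : dist (T s x) (T s x₀) ≤ C * dist x x₀ := by
          rw [dist_eq_norm, dist_eq_norm, ← map_sub]
          exact le_trans ((T s).le_opNorm _) (mul_le_mul_of_nonneg_right (hC s hsmem) (norm_nonneg _))
        have h2 : dist (T s x₀) (T s₀ x₀) < ε/2 :=
          hδ₁ (lt_of_lt_of_le hds (le_trans (min_le_left _ _) (min_le_left _ _)))
        have h3 : C * dist x x₀ < ε/2 := by
          have : dist x x₀ < ε / (2 * (C + 1)) := lt_of_lt_of_le hdx (min_le_right _ _)
          calc C * dist x x₀ ≤ (C+1) * dist x x₀ := by nlinarith [dist_nonneg (x := x) (y := x₀)]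
            _ < (C+1) * (ε / (2 * (C + 1))) := by
                exact mul_lt_mul_of_pos_left this (by linarith)
            _ ≤ ε/2 := by
                rw [mul_div_assoc']
                rw [div_le_div_iff₀ (by positivity) (by positivity)]
                ring_nf
                nlinarith
        linarith


lemma integrand_aesm (T : ℝ → X →L[ℝ] X) (hTcont : ∀ x : X, Continuous fun t => T t x)
    (B : U →L[ℝ] X) {M : ℝ} {u : ℝ → U} (hu : admissible M u) (t c : ℝ) :
    AEStronglyMeasurable (fun σ => T (t - σ) (B (u σ))) (volume.restrict (Set.Ioc 0 c)) := by
  have hle : volume.restrict (Set.Ioc 0 c) ≤ volume.restrict (Set.Ioi 0) :=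
    Measure.restrict_mono Set.Ioc_subset_Ioi_self le_rfl
  have h1 : AEStronglyMeasurable u (volume.restrict (Set.Ioc 0 c)) := hu.1.mono_measure hle
  have h2 : AEStronglyMeasurable (fun σ => ((t - σ : ℝ), B (u σ)))
      (volume.restrict (Set.Ioc 0 c)) :=
    ((continuous_const.sub continuous_id).aestronglyMeasurable).prodMk
      (B.continuous.comp_aestronglyMeasurable h1)
  exact (sg_jointCont T hTcont).comp_aestronglyMeasurable h2


lemma integrand_integrable (T : ℝ → X →L[ℝ] X) (hTcont : ∀ x : X, Continuous fun t => T t x)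
    (B : U →L[ℝ] X) {M : ℝ} {u : ℝ → U} (hu : admissible M u) {t c : ℝ} (htc : c ≤ t) :
    Integrable (fun σ => T (t - σ) (B (u σ))) (volume.restrict (Set.Ioc 0 c)) := by
  obtain ⟨C, hC0, hC⟩ := sg_bound T hTcont 0 t
  have hle : volume.restrict (Set.Ioc 0 c) ≤ volume.restrict (Set.Ioi 0) :=
    Measure.restrict_mono Set.Ioc_subset_Ioi_self le_rfl
  refine Integrable.mono' (integrable_const (C * (‖B‖ * M)))
    (integrand_aesm T hTcont B hu t c) ?_
  filter_upwards [ae_restrict_mem measurableSet_Ioc, ae_mono hle hu.2] with σ hσ hσM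
  calc ‖T (t - σ) (B (u σ))‖ ≤ ‖T (t - σ)‖ * ‖B (u σ)‖ := (T _).le_opNorm _
    _ ≤ C * (‖B‖ * M) := by
        refine mul_le_mul (hC _ ⟨by linarith [hσ.1, hσ.2], by linarith [hσ.1, hσ.2]⟩) ?_
          (norm_nonneg _) hC0
        calc ‖B (u σ)‖ ≤ ‖B‖ * ‖u σ‖ := B.le_opNorm _
          _ ≤ ‖B‖ * M := mul_le_mul_of_nonneg_left hσM (norm_nonneg _)


lemma traj_contOn (T : ℝ → X →L[ℝ] X) (hTcont : ∀ x : X, Continuous fun t => T t x)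
    (B : U →L[ℝ] X) (ψ : X) {M : ℝ} {u : ℝ → U} (hu : admissible M u) {a : ℝ} (ha : 0 ≤ a) :
    ContinuousOn (traj T B ψ u) (Set.Icc 0 a) := by
  obtain ⟨C, hC0, hC⟩ := sg_bound T hTcont 0 a
  have hM : (0:ℝ) ≤ M := by
    have hne : (volume.restrict (Set.Ioi (0:ℝ))) ≠ 0 := by
      rw [Ne, Measure.restrict_eq_zero]
      simp [Real.volume_Ioi]
    have : (ae (volume.restrict (Set.Ioi (0:ℝ)))).NeBot := ae_neBot.mpr hne
    obtain ⟨t, ht⟩ := hu.2.exists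
    linarith [norm_nonneg (u t)]
  set K := C * (‖B‖ * M) with hK
  have hKnn : 0 ≤ K := by positivity
  have hrepr : ∀ t ∈ Set.Icc (0:ℝ) a,
      (∫ σ in Set.Ioc 0 t, T (t - σ) (B (u σ))) =
        ∫ σ in Set.Ioc 0 a, (Set.Ioc 0 t).indicator (fun σ => T (t - σ) (B (u σ))) σ := by
    intro t ht
    rw [setIntegral_indicator measurableSet_Ioc]
    congr 1
    rw [Set.Ioc_inter_Ioc, min_eq_right ht.2, max_self]
  intro t₀ ht₀
  have key : Tendsto
      (fun t => ∫ σ in Set.Ioc 0 a, (Set.Ioc 0 t).indicator (fun σ => T (t - σ) (B (u σ))) σ)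
      (𝓝[Set.Icc 0 a] t₀)
      (𝓝 (∫ σ in Set.Ioc 0 a, (Set.Ioc 0 t₀).indicator (fun σ => T (t₀ - σ) (B (u σ))) σ)) := by
    refine tendsto_integral_filter_of_dominated_convergence (fun _ => K) ?_ ?_ ?_ ?_
    · filter_upwards with t
      exact (integrand_aesm T hTcont B hu t a).indicator measurableSet_Ioc
    · filter_upwards [self_mem_nhdsWithin] with t ht
      filter_upwards [ae_mono (Measure.restrict_mono Set.Ioc_subset_Ioi_self le_rfl) hu.2]
        with σ hσM
      by_cases hmem : σ ∈ Set.Ioc 0 t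
      · rw [Set.indicator_of_mem hmem]
        calc ‖T (t - σ) (B (u σ))‖ ≤ ‖T (t - σ)‖ * ‖B (u σ)‖ := (T _).le_opNorm _
          _ ≤ C * (‖B‖ * M) := by
              refine mul_le_mul (hC _ ⟨by linarith [hmem.1, hmem.2], ?_⟩)
                ?_ (norm_nonneg _) hC0
              · have h2 := ht.2
                linarith [hmem.1, hmem.2]
              · calc ‖B (u σ)‖ ≤ ‖B‖ * ‖u σ‖ := B.le_opNorm _
                  _ ≤ ‖B‖ * M := mul_le_mul_of_nonneg_left hσM (norm_nonneg _)
      · rw [Set.indicator_of_notMem hmem, norm_zero]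
        exact hKnn
    · exact integrableOn_const measure_Ioc_lt_top.ne
    · have hne : ∀ᵐ σ ∂volume.restrict (Set.Ioc 0 a), σ ≠ t₀ := by
        refine ae_restrict_of_ae ?_
        have h0 : volume ({t₀} : Set ℝ) = 0 := Real.volume_singleton
        filter_upwards [measure_eq_zero_iff_ae_notMem.mp h0] with σ hσ
        simpa using hσ
      filter_upwards [hne, ae_restrict_mem measurableSet_Ioc] with σ hσne hσmem
      rcases lt_or_gt_of_ne hσne with hlt | hgt
      · have hev : ∀ᶠ t in 𝓝[Set.Icc 0 a] t₀,
            (Set.Ioc 0 t).indicator (fun σ => T (t - σ) (B (u σ))) σ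
              = T (t - σ) (B (u σ)) := by
          filter_upwards [eventually_nhdsWithin_of_eventually_nhds
            (eventually_gt_nhds hlt)] with t hσt
          exact Set.indicator_of_mem (Set.mem_Ioc.mpr ⟨hσmem.1, le_of_lt hσt⟩) _
        have hcont : Tendsto (fun t => T (t - σ) (B (u σ))) (𝓝[Set.Icc 0 a] t₀)
            (𝓝 (T (t₀ - σ) (B (u σ)))) := by
          have hc : Continuous fun t : ℝ => T (t - σ) (B (u σ)) :=
            (hTcont (B (u σ))).comp (continuous_id.sub continuous_const)
          exact (hc.tendsto t₀).mono_left nhdsWithin_le_nhds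
        rw [Set.indicator_of_mem (Set.mem_Ioc.mpr ⟨hσmem.1, le_of_lt hlt⟩)]
        exact Tendsto.congr' (hev.mono fun t h => h.symm) hcont
      · have hev : ∀ᶠ t in 𝓝[Set.Icc 0 a] t₀,
            (Set.Ioc 0 t).indicator (fun σ => T (t - σ) (B (u σ))) σ = 0 := by
          filter_upwards [eventually_nhdsWithin_of_eventually_nhds
            (eventually_lt_nhds hgt)] with t hσt
          exact Set.indicator_of_notMem (fun hmem => absurd hmem.2 (not_le.mpr hσt)) _
        rw [Set.indicator_of_notMem (fun hmem => absurd hmem.2 (not_le.mpr hgt))]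
        exact Tendsto.congr' (hev.mono fun t h => h.symm) tendsto_const_nhds
  have h1 : ContinuousWithinAt (fun t => T t ψ) (Set.Icc 0 a) t₀ :=
    ((hTcont ψ).tendsto t₀).mono_left nhdsWithin_le_nhds
  have h2 : ContinuousWithinAt (fun t => T t ψ +
      ∫ σ in Set.Ioc 0 a, (Set.Ioc 0 t).indicator (fun σ => T (t - σ) (B (u σ))) σ)
      (Set.Icc 0 a) t₀ := h1.add key
  exact h2.congr (fun t ht => by rw [traj, hrepr t ht]) (by rw [traj, hrepr t₀ ht₀])


lemma traj_zero (T : ℝ → X →L[ℝ] X) (hT0 : T 0 = 1) (B : U →L[ℝ] X) (ψ : X) (u : ℝ → U) :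
    traj T B ψ u 0 = ψ := by
  rw [traj, hT0]
  simp [Set.Ioc_self]

lemma avg_tendsto {p : ℝ → ℝ} (hp : Continuous p) (t₀ : ℝ) :
    Tendsto (fun δ => ⨍ σ in Metric.closedBall t₀ δ, p σ) (𝓝[>] 0) (𝓝 (p t₀)) := by
  rw [Metric.tendsto_nhdsWithin_nhds]
  intro ε hε
  have hpc := hp.continuousAt (x := t₀)
  rw [Metric.continuousAt_iff] at hpc
  obtain ⟨δc, hδc0, hδc⟩ := hpc (ε/2) (by positivity)
  refine ⟨δc/2, by positivity, ?_⟩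
  intro δ hδmem hδd
  have hδ0 : 0 < δ := hδmem
  have hδlt : δ < δc/2 := by
    rw [Real.dist_eq, sub_zero, abs_of_pos hδ0] at hδd
    exact hδd
  have hvol : (volume (Metric.closedBall t₀ δ)).toReal = 2*δ := by
    rw [Real.volume_closedBall]
    exact ENNReal.toReal_ofReal (by positivity)
  have hvol_lt : volume (Metric.closedBall t₀ δ) < ⊤ := by
    rw [Real.volume_closedBall]; exact ENNReal.ofReal_lt_top
  have hint : IntegrableOn p (Metric.closedBall t₀ δ) volume :=
    hp.continuousOn.integrableOn_compact (isCompact_closedBall _ _)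
  have heq : (⨍ σ in Metric.closedBall t₀ δ, p σ) - p t₀
      = (2*δ)⁻¹ * ∫ σ in Metric.closedBall t₀ δ, (p σ - p t₀) := by
    rw [setAverage_eq, smul_eq_mul, integral_sub hint (integrableOn_const hvol_lt.ne),
      setIntegral_const, measureReal_def, hvol, smul_eq_mul]
    field_simp
  have hest : ‖∫ σ in Metric.closedBall t₀ δ, (p σ - p t₀)‖ ≤ (ε/2) * (2*δ) := by
    have := norm_setIntegral_le_of_norm_le_const (μ := volume) hvol_lt
      (C := ε/2) (f := fun σ => p σ - p t₀) ?_
    · rwa [measureReal_def, hvol] at this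
    · intro x hx
      rw [Real.norm_eq_abs]
      refine le_of_lt (hδc ?_)
      rw [Metric.mem_closedBall] at hx
      calc dist x t₀ ≤ δ := hx
        _ < δc := by linarith
  rw [Real.dist_eq, heq]
  rw [Real.norm_eq_abs] at hest
  have h1 : |(2*δ)⁻¹ * ∫ σ in Metric.closedBall t₀ δ, (p σ - p t₀)| ≤ (2*δ)⁻¹ * (ε/2 * (2*δ)) := by
    rw [abs_mul, abs_of_pos (by positivity : (0:ℝ) < (2*δ)⁻¹)]
    exact mul_le_mul_of_nonneg_left hest (by positivity)
  calc |(2*δ)⁻¹ * ∫ σ in Metric.closedBall t₀ δ, (p σ - p t₀)| ≤ (2*δ)⁻¹ * (ε/2 * (2*δ)) := h1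
    _ = ε/2 := by field_simp
    _ < ε := by linarith

end Aux

/-- (Maximum principle for the time optimal control problem.)
If `(τ*, u*)` solves `(TP)^M` with `ψ ∉ B(0,r)`, then there exists `η ∈ X`, `η ≠ 0`, such that
for a.e. `t ∈ (0,τ*)`, `⟨u*(t), B* T*_{τ*-t} η⟩ = max {⟨v, B* T*_{τ*-t} η⟩ : ‖v‖ ≤ M}`,
and moreover `η = -z(τ*;ψ,u*)`. -/
theorem stmt6 {X U : Type*} [NormedAddCommGroup X] [InnerProductSpace ℝ X] [CompleteSpace X]
    [NormedAddCommGroup U] [InnerProductSpace ℝ U] [CompleteSpace U]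
    (T : ℝ → X →L[ℝ] X) (B : U →L[ℝ] X)
    (hT0 : T 0 = 1)
    (hTadd : ∀ s t : ℝ, 0 ≤ s → 0 ≤ t → T (s + t) = (T s).comp (T t))
    (hTcont : ∀ x : X, Continuous fun t => T t x)
    (r M : ℝ) (hr : 0 < r) (hM : 0 < M)
    (ψ : X) (hψ : ψ ∉ Metric.closedBall (0 : X) r)
    (τs : ℝ) (us : ℝ → U) (hτs : 0 ≤ τs)
    (hus_adm : admissible M us)
    (hus_target : traj T B ψ us τs ∈ Metric.closedBall (0 : X) r)
    (hopt : ∀ t : ℝ, 0 ≤ t → ∀ u : ℝ → U, admissible M u →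
      traj T B ψ u t ∈ Metric.closedBall (0 : X) r → τs ≤ t) :
    ∃ η : X, η ≠ 0 ∧ η = -traj T B ψ us τs ∧
      ∀ᵐ t ∂volume.restrict (Set.Ioo 0 τs),
        IsGreatest ((fun v : U => ⟪v, B.adjoint ((T (τs - t)).adjoint η)⟫) ''
            Metric.closedBall (0 : U) M)
          ⟪us t, B.adjoint ((T (τs - t)).adjoint η)⟫ := by
  have hψnorm : r < ‖ψ‖ := by
    by_contra h
    exact hψ (by simpa [Metric.mem_closedBall, dist_zero_right] using not_lt.mp h)
  -- positivity of optimal time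
  have hτpos : 0 < τs := by
    rcases lt_or_eq_of_le hτs with h | h
    · exact h
    · exfalso
      apply hψ
      rw [← traj_zero T hT0 B ψ us, h]
      exact hus_target
  set z : X := traj T B ψ us τs with hz
  -- every admissible control is outside the open ball at time τs
  have hF : ∀ u : ℝ → U, admissible M u → r ≤ ‖traj T B ψ u τs‖ := by
    intro u hu
    by_contra hlt
    push_neg at hlt
    have hcont : ContinuousOn (fun t => ‖traj T B ψ u t‖) (Set.Icc 0 τs) :=
      (traj_contOn T hTcont B ψ hu hτs).norm
    have : r ∈ Set.Icc ‖traj T B ψ u τs‖ ‖traj T B ψ u 0‖ := by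
      rw [traj_zero T hT0 B ψ u]
      exact ⟨le_of_lt hlt, le_of_lt hψnorm⟩
    obtain ⟨t, htmem, hft⟩ := intermediate_value_Icc' hτs hcont this
    simp only at hft
    have hτt : τs ≤ t := by
      refine hopt t htmem.1 u hu ?_
      rw [Metric.mem_closedBall, dist_zero_right, hft]
    have hteq : t = τs := le_antisymm htmem.2 hτt
    rw [hteq] at hft
    rw [hft] at hlt
    exact absurd hlt (lt_irrefl r)
  -- the norm of z is exactly r
  have hz_le : ‖z‖ ≤ r := by simpa [Metric.mem_closedBall, dist_zero_right] using hus_target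
  have hz_norm : ‖z‖ = r := by
    refine le_antisymm hz_le ?_
    have hne : (0:ℝ) ≠ τs := ne_of_lt hτpos
    have hNB : (𝓝[Set.Ico (0:ℝ) τs] τs).NeBot := by
      refine mem_closure_iff_nhdsWithin_neBot.mp ?_
      rw [closure_Ico hne]
      exact ⟨hτs, le_rfl⟩
    have hcont : ContinuousWithinAt (fun t => ‖traj T B ψ us t‖) (Set.Ico 0 τs) τs := by
      refine ContinuousWithinAt.mono ?_ Set.Ico_subset_Icc_self
      exact ((traj_contOn T hTcont B ψ hus_adm hτs).norm) τs ⟨hτs, le_rfl⟩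
    have htd : Tendsto (fun t => ‖traj T B ψ us t‖) (𝓝[Set.Ico 0 τs] τs) (𝓝 ‖z‖) := hcont
    refine ge_of_tendsto htd ?_
    filter_upwards [self_mem_nhdsWithin] with t ht
    by_contra hlt
    push_neg at hlt
    have : τs ≤ t := hopt t ht.1 us hus_adm
      (by rw [Metric.mem_closedBall, dist_zero_right]; exact le_of_lt hlt)
    exact absurd this (not_le.mpr ht.2)
  refine ⟨-z, ?_, rfl, ?_⟩
  · simp only [ne_eq, neg_eq_zero]
    intro h
    rw [h, norm_zero] at hz_norm
    exact absurd hz_norm (ne_of_lt hr)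
  -- variational inequality
  have hIus : Integrable (fun σ => T (τs - σ) (B (us σ))) (volume.restrict (Set.Ioc 0 τs)) :=
    integrand_integrable T hTcont B hus_adm le_rfl
  have hlin : ∀ (θ : ℝ), 0 ≤ θ → θ ≤ 1 → ∀ u : ℝ → U, admissible M u →
      traj T B ψ (fun σ => θ • u σ + (1-θ) • us σ) τs
        = z + θ • (traj T B ψ u τs - z) := by
    intro θ h0 h1 u hu
    have hIu : Integrable (fun σ => T (τs - σ) (B (u σ)))
        (volume.restrict (Set.Ioc 0 τs)) := integrand_integrable T hTcont B hu le_rfl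
    have hint : (∫ σ in Set.Ioc 0 τs, T (τs - σ) (B (θ • u σ + (1-θ) • us σ)))
        = θ • (∫ σ in Set.Ioc 0 τs, T (τs - σ) (B (u σ)))
          + (1-θ) • ∫ σ in Set.Ioc 0 τs, T (τs - σ) (B (us σ)) := by
      have heq : ∀ σ : ℝ, T (τs - σ) (B (θ • u σ + (1-θ) • us σ))
          = θ • T (τs - σ) (B (u σ)) + (1-θ) • T (τs - σ) (B (us σ)) := by
        intro σ
        simp only [map_add, ContinuousLinearMap.map_smul]
      rw [integral_congr_ae (Eventually.of_forall heq)]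
      have h1 : Integrable (fun σ => θ • T (τs - σ) (B (u σ)))
          (volume.restrict (Set.Ioc 0 τs)) := hIu.smul θ
      have h2 : Integrable (fun σ => (1-θ) • T (τs - σ) (B (us σ)))
          (volume.restrict (Set.Ioc 0 τs)) := hIus.smul (1-θ)
      rw [integral_add h1 h2, integral_smul, integral_smul]
    rw [traj, hint, hz, traj, traj]
    module
  have hadm_comb : ∀ (θ : ℝ), 0 ≤ θ → θ ≤ 1 → ∀ u : ℝ → U, admissible M u →
      admissible M (fun σ => θ • u σ + (1-θ) • us σ) := by
    intro θ h0 h1 u hu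
    constructor
    · exact ((hu.1.const_smul θ).add (hus_adm.1.const_smul (1-θ)))
    · filter_upwards [hu.2, hus_adm.2] with σ h1u h2u
      calc ‖θ • u σ + (1-θ) • us σ‖ ≤ ‖θ • u σ‖ + ‖(1-θ) • us σ‖ := norm_add_le _ _
        _ = θ * ‖u σ‖ + (1-θ) * ‖us σ‖ := by
            rw [norm_smul, norm_smul, Real.norm_eq_abs, Real.norm_eq_abs,
              abs_of_nonneg h0, abs_of_nonneg (by linarith)]
        _ ≤ θ * M + (1-θ) * M := by
            refine add_le_add (mul_le_mul_of_nonneg_left h1u h0)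
              (mul_le_mul_of_nonneg_left h2u (by linarith))
        _ = M := by ring
  have hVI : ∀ u : ℝ → U, admissible M u →
      ⟪traj T B ψ u τs, -z⟫ ≤ ⟪z, -z⟫ := by
    intro u hu
    set b : X := traj T B ψ u τs - z with hb
    have hkey : ∀ θ : ℝ, 0 < θ → θ ≤ 1 → 0 ≤ 2 * ⟪z, b⟫ + θ * ‖b‖^2 := by
      intro θ hθ0 hθ1
      have h1 := hF _ (hadm_comb θ (le_of_lt hθ0) hθ1 u hu)
      rw [hlin θ (le_of_lt hθ0) hθ1 u hu] at h1
      have hsq : r^2 ≤ ‖z + θ • b‖^2 := by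
        have h2 : 0 ≤ ‖z + θ • b‖ := norm_nonneg _
        nlinarith
      rw [norm_add_sq_real, hz_norm, real_inner_smul_right, norm_smul,
        Real.norm_eq_abs, abs_of_nonneg (le_of_lt hθ0), mul_pow] at hsq
      nlinarith
    have hzb : 0 ≤ ⟪z, b⟫ := by
      by_contra hneg
      push_neg at hneg
      by_cases hb0 : ‖b‖ = 0
      · have := hkey 1 one_pos le_rfl
        rw [hb0] at this
        nlinarith
      · have hbpos : 0 < ‖b‖^2 := by positivity
        set θ := min 1 (-⟪z, b⟫ / ‖b‖^2) with hθdef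
        have hθ0 : 0 < θ := lt_min one_pos (div_pos (by linarith) hbpos)
        have := hkey θ hθ0 (min_le_left _ _)
        have hθle : θ * ‖b‖^2 ≤ -⟪z, b⟫ := by
          calc θ * ‖b‖^2 ≤ (-⟪z, b⟫ / ‖b‖^2) * ‖b‖^2 :=
              mul_le_mul_of_nonneg_right (min_le_right _ _) (le_of_lt hbpos)
            _ = -⟪z, b⟫ := by field_simp
        nlinarith
    rw [hb, inner_sub_right] at hzb
    rw [inner_neg_right, inner_neg_right]
    have hc : ⟪traj T B ψ u τs, z⟫ = ⟪z, traj T B ψ u τs⟫ := real_inner_comm _ _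
    have hcc : ⟪z, z⟫ = ⟪z, z⟫ := rfl
    linarith
  set w : X := -z with hwdef
  -- the integrand inner products
  set q : ℝ → ℝ := fun σ => ⟪T (τs - σ) (B (us σ)), w⟫ with hqdef
  have hq_int : Integrable q (volume.restrict (Set.Ioc 0 τs)) := hIus.inner_const w
  have hswap : ∀ (f : ℝ → X), Integrable f (volume.restrict (Set.Ioc 0 τs)) →
      (∫ σ in Set.Ioc 0 τs, ⟪f σ, w⟫) = ⟪∫ σ in Set.Ioc 0 τs, f σ, w⟫ := by
    intro f hf
    calc (∫ σ in Set.Ioc 0 τs, ⟪f σ, w⟫) = ∫ σ in Set.Ioc 0 τs, ⟪w, f σ⟫ := by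
          simp_rw [real_inner_comm]
      _ = ⟪w, ∫ σ in Set.Ioc 0 τs, f σ⟫ := integral_inner hf w
      _ = ⟪∫ σ in Set.Ioc 0 τs, f σ, w⟫ := real_inner_comm _ _
  have hIneq : ∀ u : ℝ → U, admissible M u →
      (∫ σ in Set.Ioc 0 τs, ⟪T (τs - σ) (B (u σ)), w⟫) ≤ ∫ σ in Set.Ioc 0 τs, q σ := by
    intro u hu
    have hIu : Integrable (fun σ => T (τs - σ) (B (u σ)))
        (volume.restrict (Set.Ioc 0 τs)) := integrand_integrable T hTcont B hu le_rfl
    have h := hVI u hu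
    have hexp : ∀ (v' : ℝ → U), (traj T B ψ v' τs : X)
        = T τs ψ + ∫ σ in Set.Ioc 0 τs, T (τs - σ) (B (v' σ)) := fun _ => rfl
    rw [hz, hexp u, hexp us, inner_add_left, inner_add_left] at h
    rw [hswap _ hIu, hqdef]
    have h2 := hswap _ hIus
    rw [h2]
    linarith
  -- the pointwise-interval inequality
  have hE : ∀ v : U, ‖v‖ ≤ M → ∀ E : Set ℝ, MeasurableSet E →
      (∫ σ in Set.Ioc 0 τs ∩ E, ⟪T (τs - σ) (B v), w⟫)
        ≤ ∫ σ in Set.Ioc 0 τs ∩ E, q σ := by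
    intro v hv E hEm
    classical
    set p : ℝ → ℝ := fun σ => ⟪T (τs - σ) (B v), w⟫ with hpdef
    have hp_cont : Continuous p := by
      exact Continuous.inner ((hTcont (B v)).comp (continuous_const.sub continuous_id))
        continuous_const
    have hp_int : Integrable p (volume.restrict (Set.Ioc 0 τs)) :=
      hp_cont.integrableOn_Ioc
    set u' : ℝ → U := E.piecewise (fun _ => v) us with hu'def
    have hu'adm : admissible M u' := by
      constructor
      · exact AEStronglyMeasurable.piecewise hEm aestronglyMeasurable_const
          (hus_adm.1.restrict)
      · filter_upwards [hus_adm.2] with σ hσ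
        by_cases hmem : σ ∈ E
        · rw [hu'def, Set.piecewise_eq_of_mem _ _ _ hmem]
          exact hv
        · rw [hu'def, Set.piecewise_eq_of_notMem _ _ _ hmem]
          exact hσ
    have h := hIneq u' hu'adm
    have hpt : ∀ σ : ℝ, ⟪T (τs - σ) (B (u' σ)), w⟫ = q σ + E.indicator (fun σ => p σ - q σ) σ := by
      intro σ
      by_cases hmem : σ ∈ E
      · rw [hu'def, Set.piecewise_eq_of_mem _ _ _ hmem, Set.indicator_of_mem hmem]
        simp [hpdef]
      · rw [hu'def, Set.piecewise_eq_of_notMem _ _ _ hmem, Set.indicator_of_notMem hmem]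
        simp [hqdef]
    rw [integral_congr_ae (Eventually.of_forall hpt)] at h
    have hpq_int : Integrable (fun σ => p σ - q σ) (volume.restrict (Set.Ioc 0 τs)) :=
      hp_int.sub hq_int
    rw [integral_add hq_int (hpq_int.indicator hEm)] at h
    rw [setIntegral_indicator hEm] at h
    have hsplit : (∫ σ in Set.Ioc 0 τs ∩ E, (p σ - q σ)) =
        (∫ σ in Set.Ioc 0 τs ∩ E, p σ) - ∫ σ in Set.Ioc 0 τs ∩ E, q σ :=
      integral_sub (MeasureTheory.IntegrableOn.mono_set hp_int Set.inter_subset_left)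
        (MeasureTheory.IntegrableOn.mono_set hq_int Set.inter_subset_left)
    rw [hsplit] at h
    linarith
  -- final pointwise argument
  classical
  set qt : ℝ → ℝ := (Set.Ioc 0 τs).indicator q with hqtdef
  have hqt_int : Integrable qt volume :=
    MeasureTheory.IntegrableOn.integrable_indicator hq_int measurableSet_Ioc
  have hleb : ∀ᵐ t₀ ∂(volume : Measure ℝ),
      Tendsto (fun δ => ⨍ σ in Metric.closedBall t₀ δ, qt σ) (𝓝[>] 0) (𝓝 (qt t₀)) := by
    filter_upwards [IsUnifLocDoublingMeasure.ae_tendsto_average (μ := (volume : Measure ℝ))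
      hqt_int.locallyIntegrable 1] with t₀ hx
    refine hx (fun _ => t₀) id tendsto_id ?_
    filter_upwards [self_mem_nhdsWithin] with j hj
    simp only [Metric.mem_closedBall, dist_self, id]
    nlinarith [Set.mem_Ioi.mp hj]
  have hbound_ae : ∀ᵐ t ∂volume.restrict (Set.Ioo 0 τs), ‖us t‖ ≤ M := by
    have h1 : ∀ᵐ t ∂(volume : Measure ℝ), t ∈ Set.Ioi (0:ℝ) → ‖us t‖ ≤ M :=
      (ae_restrict_iff' measurableSet_Ioi).mp hus_adm.2
    filter_upwards [ae_restrict_of_ae h1, ae_restrict_mem measurableSet_Ioo] with t h1t h2t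
    exact h1t h2t.1
  filter_upwards [ae_restrict_of_ae hleb, hbound_ae, ae_restrict_mem measurableSet_Ioo]
    with t₀ hleb₀ hb₀ hmem₀
  set g₀ : U := B.adjoint ((T (τs - t₀)).adjoint w) with hg₀def
  have hqval : ⟪us t₀, g₀⟫ = q t₀ := by
    rw [hg₀def, ContinuousLinearMap.adjoint_inner_right, ContinuousLinearMap.adjoint_inner_right,
      hqdef]
  have ht₀Ioc : t₀ ∈ Set.Ioc 0 τs := ⟨hmem₀.1, le_of_lt hmem₀.2⟩
  have hqt_val : qt t₀ = q t₀ := Set.indicator_of_mem ht₀Ioc q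
  have hupper : q t₀ ≤ M * ‖g₀‖ := by
    rw [← hqval]
    calc ⟪us t₀, g₀⟫ ≤ ‖us t₀‖ * ‖g₀‖ := real_inner_le_norm _ _
      _ ≤ M * ‖g₀‖ := mul_le_mul_of_nonneg_right hb₀ (norm_nonneg _)
  have hlower : M * ‖g₀‖ ≤ q t₀ := by
    by_cases hg : g₀ = 0
    · rw [← hqval, hg]
      simp
    · set v : U := (M / ‖g₀‖) • g₀ with hvdef
      have hgn : 0 < ‖g₀‖ := norm_pos_iff.mpr hg
      have hvnorm : ‖v‖ = M := by
        rw [hvdef, norm_smul, Real.norm_eq_abs, abs_of_pos (by positivity)]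
        field_simp
      set p : ℝ → ℝ := fun σ => ⟪T (τs - σ) (B v), w⟫ with hpdef
      have hp_cont : Continuous p :=
        Continuous.inner ((hTcont (B v)).comp (continuous_const.sub continuous_id))
          continuous_const
      have hpval : p t₀ = M * ‖g₀‖ := by
        have : p t₀ = ⟪v, g₀⟫ := by
          rw [hpdef, hg₀def, ContinuousLinearMap.adjoint_inner_right,
            ContinuousLinearMap.adjoint_inner_right]
        rw [this, hvdef, real_inner_smul_left, real_inner_self_eq_norm_mul_norm]
        field_simp
      have hineq : ∀ᶠ δ in 𝓝[>] (0:ℝ),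
          (⨍ σ in Metric.closedBall t₀ δ, p σ) ≤ ⨍ σ in Metric.closedBall t₀ δ, qt σ := by
        have hminpos : 0 < min t₀ (τs - t₀) :=
          lt_min hmem₀.1 (by linarith [hmem₀.2])
        filter_upwards [Ioo_mem_nhdsGT hminpos] with δ hδ
        have hδ0 : 0 < δ := hδ.1
        have hsub : Metric.closedBall t₀ δ ⊆ Set.Ioc 0 τs := by
          intro x hx
          rw [Metric.mem_closedBall, Real.dist_eq, abs_le] at hx
          constructor
          · have : δ < t₀ := lt_of_lt_of_le hδ.2 (min_le_left _ _)
            linarith [hx.1]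
          · have : δ < τs - t₀ := lt_of_lt_of_le hδ.2 (min_le_right _ _)
            linarith [hx.2]
        have hEineq := hE v (le_of_eq hvnorm) (Metric.closedBall t₀ δ) measurableSet_closedBall
        rw [Set.inter_eq_self_of_subset_right hsub] at hEineq
        have hcongr : (∫ σ in Metric.closedBall t₀ δ, qt σ)
            = ∫ σ in Metric.closedBall t₀ δ, q σ := by
          refine setIntegral_congr_fun measurableSet_closedBall ?_
          intro σ hσ
          exact Set.indicator_of_mem (hsub hσ) q
        rw [setAverage_eq, setAverage_eq, smul_eq_mul, smul_eq_mul, hcongr]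
        exact mul_le_mul_of_nonneg_left hEineq (by positivity)
      have hlim : p t₀ ≤ qt t₀ :=
        le_of_tendsto_of_tendsto (avg_tendsto hp_cont t₀) hleb₀ hineq
      rw [hpval, hqt_val] at hlim
      exact hlim
  have hqeq : q t₀ = M * ‖g₀‖ := le_antisymm hupper hlower
  constructor
  · -- membership
    by_cases hg : g₀ = 0
    · refine ⟨0, Metric.mem_closedBall_self (le_of_lt hM), ?_⟩
      simp [hg]
    · have hgn : 0 < ‖g₀‖ := norm_pos_iff.mpr hg
      refine ⟨(M / ‖g₀‖) • g₀, ?_, ?_⟩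
      · rw [Metric.mem_closedBall, dist_zero_right, norm_smul, Real.norm_eq_abs,
          abs_of_pos (by positivity)]
        rw [div_mul_cancel₀ _ (ne_of_gt hgn)]
      · simp only
        rw [real_inner_smul_left, real_inner_self_eq_norm_mul_norm, hqval, hqeq]
        field_simp
  · rintro x ⟨v', hv', rfl⟩
    rw [hqval, hqeq]
    calc ⟪v', g₀⟫ ≤ ‖v'‖ * ‖g₀‖ := real_inner_le_norm _ _
      _ ≤ M * ‖g₀‖ := by
          refine mul_le_mul_of_nonneg_right ?_ (norm_nonneg _)
          rw [Metric.mem_closedBall, dist_zero_right] at hv'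
          exact hv'
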